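/- Let D = A∂_X + B∂_Y with A, B ∈ ℤ[X,Y], deg A, deg B ≤ d, ‖A‖_∞, ‖B‖_∞ ≤ H, and l = (N+1)(N+2)/2. Then the height of the N-th ecstatic polynomial satisfies ‖E_N(D)‖_∞ ≤ (2·l·H·(l(d−1)+N)³)^{l(l−1)/2}. -/

import Mathlib

open MvPolynomial Finset
open scoped Pointwise

/-- Index set for the monomial basis of polynomials of total degree at most `N` in two
variables: pairs of exponents `(i, j)` with `i + j ≤ N`.  It has `(N+1)(N+2)/2` elements. -/
abbrev EcsIdx (N : ℕ) := {m : Fin (N + 1) × Fin (N + 1) // (m.1 : ℕ) + (m.2 : ℕ) ≤ N}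

/-- The monomial basis `X^i Y^j`, `i + j ≤ N`, of `R[X,Y]_{≤N}`. -/
noncomputable def monFam {R : Type*} [CommRing R] (N : ℕ) :
    EcsIdx N → MvPolynomial (Fin 2) R :=
  fun m => X 0 ^ (m.val.1 : ℕ) * X 1 ^ (m.val.2 : ℕ)

/-- The ecstatic matrix of the derivation `D = A ∂_X + B ∂_Y` with respect to a family
`w` indexed by `EcsIdx N`: its rows are `D^{j}(w i)` for `j = 0, …, l-1` (rows enumerated via
the equivalence `EcsIdx N ≃ Fin l`). -/
noncomputable def ecsMatOf {R : Type*} [CommRing R] (A B : MvPolynomial (Fin 2) R) (N : ℕ)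
    (w : EcsIdx N → MvPolynomial (Fin 2) R) :
    Matrix (EcsIdx N) (EcsIdx N) (MvPolynomial (Fin 2) R) :=
  fun j i =>
    ((fun h => A * pderiv 0 h + B * pderiv 1 h)^[((Fintype.equivFin (EcsIdx N)) j : ℕ)]) (w i)

/-- The `N`-th ecstatic polynomial `E_N(D)` of `D = A ∂_X + B ∂_Y`: the determinant of the
ecstatic matrix built on the monomial basis of `R[X,Y]_{≤N}`. -/
noncomputable def ecstatic {R : Type*} [CommRing R] (A B : MvPolynomial (Fin 2) R) (N : ℕ) :
    MvPolynomial (Fin 2) R :=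
  (ecsMatOf A B N (monFam N)).det

namespace EcstaticAux

noncomputable def nrm (P : MvPolynomial (Fin 2) ℤ) : ℤ := ∑ m ∈ P.support, |P.coeff m|

lemma nrm_eq_sum {P : MvPolynomial (Fin 2) ℤ} {s : Finset (Fin 2 →₀ ℕ)}
    (h : P.support ⊆ s) : nrm P = ∑ m ∈ s, |P.coeff m| :=
  Finset.sum_subset h (fun m _ hm => by
    simp [MvPolynomial.notMem_support_iff.mp hm])

lemma nrm_nonneg (P : MvPolynomial (Fin 2) ℤ) : 0 ≤ nrm P := by
  show (0:ℤ) ≤ ∑ m ∈ P.support, |P.coeff m|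
  exact Finset.sum_nonneg fun m _ => abs_nonneg (P.coeff m)

lemma abs_coeff_le_nrm (P : MvPolynomial (Fin 2) ℤ) (m : Fin 2 →₀ ℕ) :
    |P.coeff m| ≤ nrm P := by
  by_cases h : m ∈ P.support
  · show |P.coeff m| ≤ ∑ m ∈ P.support, |P.coeff m|
    exact Finset.single_le_sum (f := fun m => |P.coeff m|) (fun m _ => abs_nonneg (P.coeff m)) h
  · simpa [MvPolynomial.notMem_support_iff.mp h] using nrm_nonneg P

lemma nrm_zero : nrm 0 = 0 := by simp [nrm]

lemma nrm_add (P Q : MvPolynomial (Fin 2) ℤ) : nrm (P + Q) ≤ nrm P + nrm Q := by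
  classical
  rw [nrm_eq_sum (MvPolynomial.support_add (p := P) (q := Q)),
      nrm_eq_sum (Finset.subset_union_left (s₁ := P.support) (s₂ := Q.support)),
      nrm_eq_sum (Finset.subset_union_right (s₁ := P.support) (s₂ := Q.support)),
      ← Finset.sum_add_distrib]
  exact Finset.sum_le_sum fun m _ => by simpa using abs_add_le (P.coeff m) (Q.coeff m)

lemma nrm_neg (P : MvPolynomial (Fin 2) ℤ) : nrm (-P) = nrm P := by
  simp [nrm, nrm_eq_sum, MvPolynomial.support_neg]

lemma nrm_monomial (m : Fin 2 →₀ ℕ) (c : ℤ) : nrm (monomial m c) = |c| := by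
  classical
  by_cases hc : c = 0
  · simp [hc, nrm]
  · rw [nrm, MvPolynomial.support_monomial, if_neg hc, Finset.sum_singleton,
      MvPolynomial.coeff_monomial, if_pos rfl]

lemma nrm_one : nrm 1 = 1 := by
  simpa using nrm_monomial 0 1

lemma nrm_mul (P Q : MvPolynomial (Fin 2) ℤ) : nrm (P * Q) ≤ nrm P * nrm Q := by
  classical
  rw [nrm_eq_sum (MvPolynomial.support_mul P Q)]
  have key : ∀ m, |(P * Q).coeff m|
      ≤ ∑ x ∈ (P.support ×ˢ Q.support).filter (fun x => x.1 + x.2 = m),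
          |P.coeff x.1| * |Q.coeff x.2| := by
    intro m
    rw [MvPolynomial.coeff_mul]
    have e1 : ∑ x ∈ Finset.HasAntidiagonal.antidiagonal m, P.coeff x.1 * Q.coeff x.2
        = ∑ x ∈ (P.support ×ˢ Q.support).filter (fun x => x.1 + x.2 = m),
            P.coeff x.1 * Q.coeff x.2 := by
      refine (Finset.sum_subset ?_ ?_).symm
      · intro x hx
        simp only [Finset.mem_filter] at hx
        simpa [Finset.mem_antidiagonal] using hx.2
      · intro x hx hx'
        rw [Finset.HasAntidiagonal.mem_antidiagonal] at hx
        simp only [Finset.mem_filter, Finset.mem_product, hx, and_true] at hx'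
        rcases (not_and_or.mp hx') with h | h
        · rw [MvPolynomial.notMem_support_iff.mp h, zero_mul]
        · rw [MvPolynomial.notMem_support_iff.mp h, mul_zero]
    rw [e1]
    refine (Finset.abs_sum_le_sum_abs _ _).trans_eq ?_
    exact Finset.sum_congr rfl fun x _ => abs_mul _ _
  calc ∑ m ∈ P.support + Q.support, |(P * Q).coeff m|
      ≤ ∑ m ∈ P.support + Q.support,
          ∑ x ∈ (P.support ×ˢ Q.support).filter (fun x => x.1 + x.2 = m),
            |P.coeff x.1| * |Q.coeff x.2| := Finset.sum_le_sum fun m _ => key m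
    _ = ∑ x ∈ P.support ×ˢ Q.support, |P.coeff x.1| * |Q.coeff x.2| := by
        refine Finset.sum_fiberwise_of_maps_to ?_ _
        intro x hx
        rw [Finset.mem_product] at hx
        exact Finset.add_mem_add hx.1 hx.2
    _ = nrm P * nrm Q := by
        rw [nrm, nrm, Finset.sum_mul_sum, Finset.sum_product]

lemma nrm_sum {ι : Type*} (s : Finset ι) (f : ι → MvPolynomial (Fin 2) ℤ) :
    nrm (∑ i ∈ s, f i) ≤ ∑ i ∈ s, nrm (f i) := by
  classical
  induction s using Finset.cons_induction with
  | empty => simp [nrm_zero]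
  | cons a s ha ih =>
      rw [Finset.sum_cons, Finset.sum_cons]
      exact (nrm_add _ _).trans (by linarith)

lemma nrm_prod {ι : Type*} (s : Finset ι) (f : ι → MvPolynomial (Fin 2) ℤ) :
    nrm (∏ i ∈ s, f i) ≤ ∏ i ∈ s, nrm (f i) := by
  classical
  induction s using Finset.cons_induction with
  | empty => simp [nrm_one]
  | cons a s ha ih =>
      rw [Finset.prod_cons, Finset.prod_cons]
      refine (nrm_mul _ _).trans ?_
      exact mul_le_mul le_rfl ih (nrm_nonneg _) (nrm_nonneg _)



lemma degSum (m : Fin 2 →₀ ℕ) : (m.sum fun _ e => e) = m 0 + m 1 := by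
  rw [Finsupp.sum_fintype _ _ (fun _ => rfl)]
  exact Fin.sum_univ_two _

lemma pderiv_as_sum (i : Fin 2) (h : MvPolynomial (Fin 2) ℤ) :
    pderiv i h = ∑ m ∈ h.support,
      monomial (m - Finsupp.single i 1) (h.coeff m * m i) := by
  conv_lhs => rw [h.as_sum, map_sum]
  exact Finset.sum_congr rfl fun m _ => pderiv_monomial

lemma totalDegree_pderiv_le (i : Fin 2) (h : MvPolynomial (Fin 2) ℤ) :
    (pderiv i h).totalDegree ≤ h.totalDegree - 1 := by
  rw [pderiv_as_sum]
  refine (totalDegree_finset_sum _ _).trans (Finset.sup_le fun m hm => ?_)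
  by_cases hmi : m i = 0
  · simp [hmi]
  · have hms := MvPolynomial.le_totalDegree hm
    rw [degSum] at hms
    have h0 : (m - Finsupp.single i (1:ℕ)) 0 = m 0 - (Finsupp.single i (1:ℕ)) 0 :=
      Finsupp.tsub_apply _ _ _
    have h1 : (m - Finsupp.single i (1:ℕ)) 1 = m 1 - (Finsupp.single i (1:ℕ)) 1 :=
      Finsupp.tsub_apply _ _ _
    have key : (m - Finsupp.single i (1:ℕ)) 0 + (m - Finsupp.single i (1:ℕ)) 1
        ≤ h.totalDegree - 1 := by
      rw [h0, h1]
      fin_cases i <;>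
        simp [Finsupp.single_apply, Fin.ext_iff] at hmi hms ⊢ <;>
        omega
    exact le_trans (totalDegree_monomial_le _ _) (le_trans (le_of_eq (degSum _)) key)

lemma nrm_pderiv_add (h : MvPolynomial (Fin 2) ℤ) :
    nrm (pderiv 0 h) + nrm (pderiv 1 h) ≤ (h.totalDegree : ℤ) * nrm h := by
  have b : ∀ i : Fin 2, nrm (pderiv i h) ≤ ∑ m ∈ h.support, |h.coeff m| * (m i : ℤ) := by
    intro i
    rw [pderiv_as_sum]
    refine (nrm_sum _ _).trans ?_
    refine Finset.sum_le_sum fun m _ => ?_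
    rw [nrm_monomial, abs_mul]
    simp
  calc nrm (pderiv 0 h) + nrm (pderiv 1 h)
      ≤ (∑ m ∈ h.support, |h.coeff m| * (m 0 : ℤ))
        + ∑ m ∈ h.support, |h.coeff m| * (m 1 : ℤ) := add_le_add (b 0) (b 1)
    _ = ∑ m ∈ h.support, |h.coeff m| * ((m 0 : ℤ) + (m 1 : ℤ)) := by
        rw [← Finset.sum_add_distrib]; exact Finset.sum_congr rfl fun m _ => by ring
    _ ≤ ∑ m ∈ h.support, |h.coeff m| * (h.totalDegree : ℤ) := by
        refine Finset.sum_le_sum fun m hm => ?_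
        have := MvPolynomial.le_totalDegree hm
        rw [degSum] at this
        have : (m 0 : ℤ) + (m 1 : ℤ) ≤ (h.totalDegree : ℤ) := by exact_mod_cast this
        exact mul_le_mul_of_nonneg_left this (abs_nonneg _)
    _ = (h.totalDegree : ℤ) * nrm h := by
        rw [← Finset.sum_mul, nrm]; ring

/-- counting -/
def ecsEquiv (n : ℕ) : EcsIdx n ≃ Σ i : Fin (n + 1), Fin (n + 1 - (i : ℕ)) where
  toFun m := ⟨m.val.1, ⟨m.val.2, by have := m.property; have := m.val.2.isLt; omega⟩⟩
  invFun x := ⟨(x.1, ⟨(x.2 : ℕ), by have := x.2.isLt; omega⟩), by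
    have := x.2.isLt; have := x.1.isLt; dsimp only; omega⟩
  left_inv m := rfl
  right_inv x := rfl

lemma two_mul_card_ecsIdx (n : ℕ) :
    2 * Fintype.card (EcsIdx n) = (n + 1) * (n + 2) := by
  rw [Fintype.card_congr (ecsEquiv n), Fintype.card_sigma]
  simp only [Fintype.card_fin]
  rw [Fin.sum_univ_eq_sum_range]
  have e1 : ∑ i ∈ Finset.range (n + 1), (n + 1 - i)
      = ∑ i ∈ Finset.range (n + 1), (i + 1) := by
    rw [← Finset.sum_range_reflect]
    refine Finset.sum_congr rfl fun i hi => ?_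
    rw [Finset.mem_range] at hi
    omega
  rw [e1, Finset.sum_add_distrib, Finset.sum_const, Finset.card_range, smul_eq_mul]
  have h2 : (∑ i ∈ Finset.range (n + 1), i) * 2 = (n + 1) * n := by
    simpa using Finset.sum_range_id_mul_two (n + 1)
  calc 2 * (∑ i ∈ Finset.range (n + 1), i + (n + 1) * 1)
      = (∑ i ∈ Finset.range (n + 1), i) * 2 + 2 * (n + 1) := by ring
    _ = (n + 1) * n + 2 * (n + 1) := by rw [h2]
    _ = (n + 1) * (n + 2) := by ring

lemma support_card_le (A : MvPolynomial (Fin 2) ℤ) (d : ℕ) (hdA : A.totalDegree ≤ d) :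
    A.support.card ≤ Fintype.card (EcsIdx d) := by
  rw [← Fintype.card_coe]
  refine Fintype.card_le_of_injective
    (fun x => ⟨(⟨x.val 0, ?_⟩, ⟨x.val 1, ?_⟩), ?_⟩) ?_
  · have := MvPolynomial.le_totalDegree x.property
    rw [degSum] at this; omega
  · have := MvPolynomial.le_totalDegree x.property
    rw [degSum] at this; omega
  · have := MvPolynomial.le_totalDegree x.property
    rw [degSum] at this
    simp only []
    omega
  · intro x y hxy
    simp only [Subtype.mk.injEq, Prod.mk.injEq, Fin.mk.injEq] at hxy
    refine Subtype.ext (Finsupp.ext fun a => ?_)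
    fin_cases a
    · exact hxy.1
    · exact hxy.2

lemma nrm_le_of_bounds (A : MvPolynomial (Fin 2) ℤ) (d : ℕ) (H : ℤ)
    (hdA : A.totalDegree ≤ d) (hA : ∀ m, |A.coeff m| ≤ H) :
    nrm A ≤ (Fintype.card (EcsIdx d) : ℤ) * H := by
  have hH : 0 ≤ H := (abs_nonneg _).trans (hA 0)
  calc nrm A ≤ ∑ m ∈ A.support, H := Finset.sum_le_sum fun m _ => hA m
    _ = (A.support.card : ℤ) * H := by rw [Finset.sum_const, nsmul_eq_mul]
    _ ≤ (Fintype.card (EcsIdx d) : ℤ) * H := by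
        have := support_card_le A d hdA
        exact mul_le_mul_of_nonneg_right (by exact_mod_cast this) hH



lemma D_deg (A B : MvPolynomial (Fin 2) ℤ) (d : ℕ) (hd : 1 ≤ d)
    (hdA : A.totalDegree ≤ d) (hdB : B.totalDegree ≤ d)
    (h : MvPolynomial (Fin 2) ℤ) (e : ℕ) (he : h.totalDegree ≤ e) :
    (A * pderiv 0 h + B * pderiv 1 h).totalDegree ≤ e + (d - 1) := by
  have key : ∀ (P : MvPolynomial (Fin 2) ℤ) (i : Fin 2), P.totalDegree ≤ d →
      (P * pderiv i h).totalDegree ≤ e + (d - 1) := by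
    intro P i hP
    by_cases h0 : h.totalDegree = 0
    · have hz : pderiv i h = 0 := by
        rw [pderiv_as_sum]
        refine Finset.sum_eq_zero fun m hm => ?_
        rw [(MvPolynomial.totalDegree_eq_zero_iff (Fin 2) h).mp h0 m hm i]
        simp
      rw [hz, mul_zero]
      simp
    · refine (totalDegree_mul _ _).trans ?_
      have h1 := totalDegree_pderiv_le i h
      omega
  exact (totalDegree_add _ _).trans (max_le (key A 0 hdA) (key B 1 hdB))

lemma D_nrm (A B : MvPolynomial (Fin 2) ℤ) (C : ℤ)
    (hAn : nrm A ≤ C) (hBn : nrm B ≤ C) (hC : 0 ≤ C)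
    (h : MvPolynomial (Fin 2) ℤ) (e : ℕ) (he : h.totalDegree ≤ e) :
    nrm (A * pderiv 0 h + B * pderiv 1 h) ≤ C * e * nrm h := by
  have k1 : nrm (A * pderiv 0 h) ≤ C * nrm (pderiv 0 h) :=
    (nrm_mul _ _).trans (mul_le_mul_of_nonneg_right hAn (nrm_nonneg _))
  have k2 : nrm (B * pderiv 1 h) ≤ C * nrm (pderiv 1 h) :=
    (nrm_mul _ _).trans (mul_le_mul_of_nonneg_right hBn (nrm_nonneg _))
  calc nrm (A * pderiv 0 h + B * pderiv 1 h)
      ≤ nrm (A * pderiv 0 h) + nrm (B * pderiv 1 h) := nrm_add _ _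
    _ ≤ C * nrm (pderiv 0 h) + C * nrm (pderiv 1 h) := add_le_add k1 k2
    _ = C * (nrm (pderiv 0 h) + nrm (pderiv 1 h)) := by ring
    _ ≤ C * ((h.totalDegree : ℤ) * nrm h) :=
        mul_le_mul_of_nonneg_left (nrm_pderiv_add h) hC
    _ ≤ C * ((e : ℤ) * nrm h) := by
        have h1 : (h.totalDegree : ℤ) ≤ (e : ℤ) := by exact_mod_cast he
        exact mul_le_mul_of_nonneg_left
          (mul_le_mul_of_nonneg_right h1 (nrm_nonneg h)) hC
    _ = C * e * nrm h := by ring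

lemma iter_bound (A B : MvPolynomial (Fin 2) ℤ) (d : ℕ) (hd : 1 ≤ d)
    (hdA : A.totalDegree ≤ d) (hdB : B.totalDegree ≤ d)
    (C : ℤ) (hAn : nrm A ≤ C) (hBn : nrm B ≤ C) (hC : 0 ≤ C)
    (v : MvPolynomial (Fin 2) ℤ) (N : ℕ) (hv : v.totalDegree ≤ N) (hnv : nrm v ≤ 1)
    (Mn : ℕ) :
    ∀ j : ℕ, N + j * (d - 1) ≤ Mn →
      ((fun h => A * pderiv 0 h + B * pderiv 1 h)^[j] v).totalDegree ≤ N + j * (d - 1)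
      ∧ nrm ((fun h => A * pderiv 0 h + B * pderiv 1 h)^[j] v) ≤ (C * (Mn : ℤ)) ^ j := by
  intro j
  induction j with
  | zero => intro _; simpa using ⟨hv, hnv⟩
  | succ j ih =>
      intro hj
      have hmono : j * (d - 1) ≤ (j + 1) * (d - 1) := Nat.mul_le_mul_right _ (by omega)
      have hj' : N + j * (d - 1) ≤ Mn := by omega
      obtain ⟨ihd, ihn⟩ := ih hj'
      rw [Function.iterate_succ_apply']
      constructor
      · refine (D_deg A B d hd hdA hdB _ _ ihd).trans ?_
        have : (j + 1) * (d - 1) = j * (d - 1) + (d - 1) := by ring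
        omega
      · refine (D_nrm A B C hAn hBn hC _ _ ihd).trans ?_
        have h1 : C * ((N + j * (d - 1) : ℕ) : ℤ) ≤ C * (Mn : ℤ) :=
          mul_le_mul_of_nonneg_left (by exact_mod_cast hj') hC
        have h2 := mul_le_mul h1 ihn (nrm_nonneg _)
          (mul_nonneg hC (Int.natCast_nonneg _))
        refine h2.trans (le_of_eq ?_)
        rw [pow_succ]; ring

lemma numeric (d N l Tn : ℕ) (hd : 1 ≤ d)
    (hl : 2 * l = (N + 1) * (N + 2)) (hT : 2 * Tn = (d + 1) * (d + 2)) :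
    l.factorial * Tn ^ (l * (l - 1) / 2)
      ≤ (2 * l * (l * (d - 1) + N) ^ 2) ^ (l * (l - 1) / 2) := by
  rcases Nat.eq_zero_or_pos N with rfl | hN
  · have : l = 1 := by omega
    subst this
    simp [Nat.factorial]
  · have hl3 : 3 ≤ l := by nlinarith
    by_cases hdN : d = 1 ∧ N = 1
    · obtain ⟨rfl, rfl⟩ := hdN
      have hl' : l = 3 := by omega
      have hT' : Tn = 3 := by omega
      subst hl'
      rw [hT']
      norm_num [Nat.factorial]
    · have hTM : Tn ≤ 2 * (l * (d - 1) + N) ^ 2 := by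
        have key : (d + 1) * (d + 2) ≤ 4 * (l * (d - 1) + N) ^ 2 := by
          rcases Nat.lt_or_ge d 2 with hd2 | hd2
          · have hd1 : d = 1 := by omega
            subst hd1
            have hN2 : 2 ≤ N := by
              rcases Nat.lt_or_ge N 2 with h | h
              · exact absurd ⟨rfl, by omega⟩ hdN
              · exact h
            simp only [Nat.sub_self, Nat.mul_zero, Nat.zero_add]
            nlinarith
          · obtain ⟨e, rfl⟩ : ∃ e, d = e + 1 := ⟨d - 1, by omega⟩
            have he1 : 1 ≤ e := by omega
            have hMe : 3 * e + 1 ≤ l * ((e + 1) - 1) + N := by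
              have h3 : 3 * e ≤ l * e := Nat.mul_le_mul_right _ (by omega)
              calc 3 * e + 1 ≤ l * e + N := by omega
                _ = l * ((e + 1) - 1) + N := by norm_num
            nlinarith
        have h5 : 2 * Tn ≤ 2 * (2 * (l * (d - 1) + N) ^ 2) := by rw [hT]; linarith
        exact Nat.le_of_mul_le_mul_left h5 (by norm_num)
      have hlE : l ≤ l * (l - 1) / 2 := by
        rw [Nat.le_div_iff_mul_le (by norm_num)]
        exact Nat.mul_le_mul_left l (by omega)
      have h1 : l.factorial ≤ l ^ (l * (l - 1) / 2) :=
        (Nat.factorial_le_pow l).trans (Nat.pow_le_pow_right (by omega) hlE)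
      have h2 : Tn ^ (l * (l - 1) / 2) ≤ (2 * (l * (d - 1) + N) ^ 2) ^ (l * (l - 1) / 2) :=
        Nat.pow_le_pow_left hTM _
      calc l.factorial * Tn ^ (l * (l - 1) / 2)
          ≤ l ^ (l * (l - 1) / 2) * (2 * (l * (d - 1) + N) ^ 2) ^ (l * (l - 1) / 2) :=
            Nat.mul_le_mul h1 h2
        _ = (2 * l * (l * (d - 1) + N) ^ 2) ^ (l * (l - 1) / 2) := by
            rw [← mul_pow]; ring_nf

lemma nrm_intCast_mul (k : ℤ) (P : MvPolynomial (Fin 2) ℤ) :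
    nrm ((k : MvPolynomial (Fin 2) ℤ) * P) ≤ |k| * nrm P := by
  refine (nrm_mul _ _).trans ?_
  have hCk : ((k : MvPolynomial (Fin 2) ℤ)) = MvPolynomial.C k :=
    (eq_intCast (MvPolynomial.C : ℤ →+* MvPolynomial (Fin 2) ℤ) k).symm
  have hk : nrm ((k : MvPolynomial (Fin 2) ℤ)) = |k| := by
    rw [hCk, MvPolynomial.C_apply, nrm_monomial]
  rw [hk]

lemma monFam_deg (N : ℕ) (i : EcsIdx N) : (monFam (R := ℤ) N i).totalDegree ≤ N := by
  refine (totalDegree_mul _ _).trans ?_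
  rw [totalDegree_X_pow, totalDegree_X_pow]
  exact i.property

lemma monFam_nrm (N : ℕ) (i : EcsIdx N) : nrm (monFam (R := ℤ) N i) ≤ 1 := by
  rw [monFam, X_pow_eq_monomial, X_pow_eq_monomial, monomial_mul, nrm_monomial]
  norm_num


end EcstaticAux

theorem ecstatic_height_bound
    (A B : MvPolynomial (Fin 2) ℤ) (d N : ℕ) (H : ℤ) (hd : 1 ≤ d)
    (hdA : A.totalDegree ≤ d) (hdB : B.totalDegree ≤ d)
    (hA : ∀ m, |A.coeff m| ≤ H) (hB : ∀ m, |B.coeff m| ≤ H) :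
    ∀ m, |(ecstatic A B N).coeff m|
      ≤ (2 * (((N + 1) * (N + 2) / 2 : ℕ) : ℤ) * H
          * ((((N + 1) * (N + 2) / 2 : ℕ) : ℤ) * ((d : ℤ) - 1) + (N : ℤ)) ^ 3)
        ^ ((((N + 1) * (N + 2) / 2) * ((N + 1) * (N + 2) / 2 - 1) / 2 : ℕ)) := by
  classical
  intro m
  have hH : 0 ≤ H := (abs_nonneg _).trans (hA 0)
  set l : ℕ := (N + 1) * (N + 2) / 2 with hldef
  have h2 := EcstaticAux.two_mul_card_ecsIdx N
  have hlcard : 2 * l = (N + 1) * (N + 2) ∧ Fintype.card (EcsIdx N) = l := by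
    rw [hldef]
    generalize (N + 1) * (N + 2) = Q at h2 ⊢
    omega
  obtain ⟨hl2, hcard⟩ := hlcard
  set Tn : ℕ := Fintype.card (EcsIdx d) with hTndef
  have hTd : 2 * Tn = (d + 1) * (d + 2) := EcstaticAux.two_mul_card_ecsIdx d
  have hAn : EcstaticAux.nrm A ≤ (Tn : ℤ) * H := EcstaticAux.nrm_le_of_bounds A d H hdA hA
  have hBn : EcstaticAux.nrm B ≤ (Tn : ℤ) * H := EcstaticAux.nrm_le_of_bounds B d H hdB hB
  set C : ℤ := (Tn : ℤ) * H with hCdef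
  have hC : 0 ≤ C := mul_nonneg (Int.natCast_nonneg _) hH
  set Mn : ℕ := l * (d - 1) + N with hMndef
  set E : ℕ := l * (l - 1) / 2 with hEdef
  set r : EcsIdx N → ℕ := fun j => ((Fintype.equivFin (EcsIdx N)) j : ℕ) with hrdef
  have entry : ∀ j i : EcsIdx N,
      EcstaticAux.nrm (ecsMatOf A B N (monFam N) j i) ≤ (C * (Mn : ℤ)) ^ r j := by
    intro j i
    have hr : r j < l := by
      rw [← hcard]; exact (Fintype.equivFin (EcsIdx N) j).isLt
    have harg : N + r j * (d - 1) ≤ Mn := by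
      have : r j * (d - 1) ≤ l * (d - 1) := Nat.mul_le_mul_right _ (by omega)
      omega
    exact (EcstaticAux.iter_bound A B d hd hdA hdB C hAn hBn hC (monFam N i) N
      (EcstaticAux.monFam_deg N i) (EcstaticAux.monFam_nrm N i) Mn (r j) harg).2
  have hsum : ∑ j : EcsIdx N, r j = E := by
    rw [hrdef]
    rw [Equiv.sum_comp (Fintype.equivFin (EcsIdx N)) (fun i : Fin _ => (i : ℕ))]
    rw [Fin.sum_univ_eq_sum_range (fun i => i), Finset.sum_range_id, hcard, hEdef]
  have hdet : EcstaticAux.nrm (ecstatic A B N) ≤ (Nat.factorial l : ℤ) * (C * (Mn : ℤ)) ^ E := by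
    rw [ecstatic, Matrix.det_apply']
    refine (EcstaticAux.nrm_sum _ _).trans ?_
    have each : ∀ σ : Equiv.Perm (EcsIdx N),
        EcstaticAux.nrm (((Equiv.Perm.sign σ : ℤ) : MvPolynomial (Fin 2) ℤ)
            * ∏ i, ecsMatOf A B N (monFam N) (σ i) i)
          ≤ (C * (Mn : ℤ)) ^ E := by
      intro σ
      refine (EcstaticAux.nrm_intCast_mul _ _).trans ?_
      have hsgn : |((Equiv.Perm.sign σ : ℤˣ) : ℤ)| = 1 := by
        rcases Int.units_eq_one_or (Equiv.Perm.sign σ) with h | h <;> rw [h] <;> norm_num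
      rw [hsgn, one_mul]
      refine (EcstaticAux.nrm_prod _ _).trans ?_
      refine le_trans (Finset.prod_le_prod (fun i _ => EcstaticAux.nrm_nonneg _)
        (fun i _ => entry (σ i) i)) ?_
      rw [Finset.prod_pow_eq_pow_sum]
      rw [show ∑ i : EcsIdx N, r (σ i) = ∑ j : EcsIdx N, r j from Equiv.sum_comp σ r, hsum]
    refine le_trans (Finset.sum_le_sum (fun σ _ => each σ)) ?_
    rw [Finset.sum_const, Finset.card_univ, Fintype.card_perm, hcard, nsmul_eq_mul]
  have hnum := EcstaticAux.numeric d N l Tn hd hl2 hTd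
  rw [← hMndef, ← hEdef] at hnum
  have hcast : (Nat.factorial l : ℤ) * (Tn : ℤ) ^ E ≤ (2 * (l : ℤ) * (Mn : ℤ) ^ 2) ^ E := by
    exact_mod_cast hnum
  have hMz : ((Mn : ℕ) : ℤ) = (l : ℤ) * ((d : ℤ) - 1) + (N : ℤ) := by
    rw [hMndef]
    push_cast [Nat.cast_sub hd]
    ring
  have final : (Nat.factorial l : ℤ) * (C * (Mn : ℤ)) ^ E
      ≤ (2 * (l : ℤ) * H * ((l : ℤ) * ((d : ℤ) - 1) + (N : ℤ)) ^ 3) ^ E := by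
    rw [← hMz]
    have e1 : (Nat.factorial l : ℤ) * (C * (Mn : ℤ)) ^ E
        = ((Nat.factorial l : ℤ) * (Tn : ℤ) ^ E) * (H * (Mn : ℤ)) ^ E := by
      rw [hCdef, mul_assoc ((Tn : ℤ)) H ((Mn : ℤ)), mul_pow ((Tn : ℤ)) (H * (Mn : ℤ)) E]
      ring
    have e2 : (2 * (l : ℤ) * H * ((Mn : ℤ)) ^ 3) ^ E
        = (2 * (l : ℤ) * (Mn : ℤ) ^ 2) ^ E * (H * (Mn : ℤ)) ^ E := by
      rw [show (2 * (l : ℤ) * H * ((Mn : ℤ)) ^ 3)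
          = (2 * (l : ℤ) * (Mn : ℤ) ^ 2) * (H * (Mn : ℤ)) from by ring, mul_pow]
    rw [e1, e2]
    exact mul_le_mul_of_nonneg_right hcast
      (pow_nonneg (mul_nonneg hH (Int.natCast_nonneg _)) E)
  exact le_trans (EcstaticAux.abs_coeff_le_nrm _ m) (le_trans hdet final)
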